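/- If f : [a,b] → [0,1] is continuous at x₀ ∈ [a,b], then D_n^{(m)}(f;x₀) → f(x₀) as n → ∞. -/

import Mathlib

open MeasureTheory

/-- The kernel `φ_σ` built from a sigmoidal function `σ`. -/
noncomputable def phiSigma (σ : ℝ → ℝ) (x : ℝ) : ℝ := (σ (x + 1) - σ (x - 1)) / 2

/-- The Durrmeyer-type max-min neural network operator `D_n^{(m)}`. -/
noncomputable def Dmm (χ σ : ℝ → ℝ) (a b : ℤ) (n : ℕ) (f : ℝ → ℝ) (x : ℝ) : ℝ :=
  sSup ((fun k : ℤ =>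
      min ((∫ t in (a:ℝ)..(b:ℝ), χ ((n : ℝ) * t - (k : ℝ)) * f t) /
            (∫ t in (a:ℝ)..(b:ℝ), χ ((n : ℝ) * t - (k : ℝ))))
        (phiSigma σ ((n : ℝ) * x - (k : ℝ)) /
          sSup ((fun d : ℤ => phiSigma σ ((n : ℝ) * x - (d : ℝ))) ''
            Set.Icc ((n : ℤ) * a) ((n : ℤ) * b - 1)))) ''
    Set.Icc ((n : ℤ) * a) ((n : ℤ) * b - 1))

section Aux
variable {σ : ℝ → ℝ}

lemma fourpt (hconc : ConcaveOn ℝ (Set.Ici 0) σ) {p q s : ℝ} (hp : 0 ≤ p)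
    (hpq : p ≤ q) (hqs : q ≤ s) : σ p + σ s ≤ σ q + σ (p + s - q) := by
  rcases eq_or_lt_of_le (hpq.trans hqs) with h | h
  · have hq : q = p := le_antisymm (by rw [h]; exact hqs) hpq
    rw [hq, show p + s - p = s by ring]
  · have hsp : (0:ℝ) < s - p := by linarith
    have hs0 : (0:ℝ) ≤ s := hp.trans (hpq.trans hqs)
    have hl : (0:ℝ) ≤ (s - q)/(s - p) := div_nonneg (by linarith) hsp.le
    have hm : (0:ℝ) ≤ (q - p)/(s - p) := div_nonneg (by linarith) hsp.le
    have hlm : (s - q)/(s - p) + (q - p)/(s - p) = 1 := by field_simp; ring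
    have c1 := hconc.2 (Set.mem_Ici.2 hp) (Set.mem_Ici.2 hs0) hl hm hlm
    have c2 := hconc.2 (Set.mem_Ici.2 hp) (Set.mem_Ici.2 hs0) hm hl (by linarith)
    simp only [smul_eq_mul] at c1 c2
    rw [show (s - q)/(s - p) * p + (q - p)/(s - p) * s = q by field_simp; ring] at c1
    rw [show (q - p)/(s - p) * p + (s - q)/(s - p) * s = p + s - q by field_simp; ring] at c2
    have e1 : (s - q)/(s - p) * σ p + (q - p)/(s - p) * σ p = σ p := by
      rw [← add_mul, hlm, one_mul]
    have e2 : (q - p)/(s - p) * σ s + (s - q)/(s - p) * σ s = σ s := by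
      rw [← add_mul]; rw [show (q - p)/(s - p) + (s - q)/(s - p) = 1 by linarith, one_mul]
    linarith

lemma sigma_zero (hodd : ∀ x : ℝ, σ (-x) - 1/2 = -(σ x - 1/2)) : σ 0 = 1/2 := by
  have h := hodd 0; rw [neg_zero] at h; linarith

lemma sigma_two (hmono : Monotone σ) (h31 : σ 1 < σ 3)
    (hodd : ∀ x : ℝ, σ (-x) - 1/2 = -(σ x - 1/2))
    (hconc : ConcaveOn ℝ (Set.Ici 0) σ) : 1/2 < σ 2 := by
  have h0 := sigma_zero hodd
  have hc := hconc.2 (show (1:ℝ) ∈ Set.Ici (0:ℝ) by norm_num)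
    (show (3:ℝ) ∈ Set.Ici (0:ℝ) by norm_num)
    (show (0:ℝ) ≤ 1/2 by norm_num) (show (0:ℝ) ≤ 1/2 by norm_num) (by norm_num)
  simp only [smul_eq_mul] at hc
  rw [show (1:ℝ)/2 * 1 + 1/2 * 3 = 2 by norm_num] at hc
  have h01 : σ 0 ≤ σ 1 := hmono (by norm_num)
  linarith

lemma phi_even (hodd : ∀ x : ℝ, σ (-x) - 1/2 = -(σ x - 1/2)) (y : ℝ) :
    phiSigma σ (-y) = phiSigma σ y := by
  have h1 := hodd (y - 1)
  have h2 := hodd (y + 1)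
  unfold phiSigma
  rw [show -y + 1 = -(y - 1) by ring, show -y - 1 = -(y + 1) by ring]
  linarith

lemma phi_nonneg (hmono : Monotone σ) (y : ℝ) : 0 ≤ phiSigma σ y := by
  have := hmono (show y - 1 ≤ y + 1 by linarith)
  unfold phiSigma; linarith

lemma phi_anti_one (hconc : ConcaveOn ℝ (Set.Ici 0) σ) {y₁ y₂ : ℝ} (h1 : 1 ≤ y₁)
    (h12 : y₁ ≤ y₂) : phiSigma σ y₂ ≤ phiSigma σ y₁ := by
  have h := fourpt hconc (p := y₁ - 1) (q := y₁ + 1) (s := y₂ + 1)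
    (by linarith) (by linarith) (by linarith)
  rw [show y₁ - 1 + (y₂ + 1) - (y₁ + 1) = y₂ - 1 by ring] at h
  unfold phiSigma; linarith

lemma phi_anti_le_one (hconc : ConcaveOn ℝ (Set.Ici 0) σ)
    (hodd : ∀ x : ℝ, σ (-x) - 1/2 = -(σ x - 1/2)) {y₁ y₂ : ℝ} (h0 : 0 ≤ y₁)
    (h12 : y₁ ≤ y₂) (h21 : y₂ ≤ 1) : phiSigma σ y₂ ≤ phiSigma σ y₁ := by
  have r1 : σ (y₁ - 1) = 1 - σ (1 - y₁) := by
    have := hodd (1 - y₁); rw [show -(1 - y₁) = y₁ - 1 by ring] at this; linarith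
  have r2 : σ (y₂ - 1) = 1 - σ (1 - y₂) := by
    have := hodd (1 - y₂); rw [show -(1 - y₂) = y₂ - 1 by ring] at this; linarith
  have h := fourpt hconc (p := 1 - y₂) (q := 1 - y₁) (s := y₂ + 1)
    (by linarith) (by linarith) (by linarith)
  rw [show 1 - y₂ + (y₂ + 1) - (1 - y₁) = y₁ + 1 by ring] at h
  unfold phiSigma; rw [r1, r2]; linarith

lemma phi_anti (hconc : ConcaveOn ℝ (Set.Ici 0) σ)
    (hodd : ∀ x : ℝ, σ (-x) - 1/2 = -(σ x - 1/2)) {y₁ y₂ : ℝ} (h0 : 0 ≤ y₁)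
    (h12 : y₁ ≤ y₂) : phiSigma σ y₂ ≤ phiSigma σ y₁ := by
  rcases le_total 1 y₁ with h | h
  · exact phi_anti_one hconc h h12
  · rcases le_total y₂ 1 with h2 | h2
    · exact phi_anti_le_one hconc hodd h0 h12 h2
    · exact (phi_anti_one hconc le_rfl h2).trans (phi_anti_le_one hconc hodd h0 h le_rfl)

lemma phi_abs (hconc : ConcaveOn ℝ (Set.Ici 0) σ)
    (hodd : ∀ x : ℝ, σ (-x) - 1/2 = -(σ x - 1/2)) {u v : ℝ} (h : |u| ≤ |v|) :
    phiSigma σ v ≤ phiSigma σ u := by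
  have e : ∀ w : ℝ, phiSigma σ w = phiSigma σ |w| := by
    intro w
    rcases abs_cases w with ⟨h1, _⟩ | ⟨h1, _⟩
    · rw [h1]
    · rw [h1, phi_even hodd]
  rw [e u, e v]
  exact phi_anti hconc hodd (abs_nonneg u) h

lemma phi_one_pos (hmono : Monotone σ) (h31 : σ 1 < σ 3)
    (hodd : ∀ x : ℝ, σ (-x) - 1/2 = -(σ x - 1/2))
    (hconc : ConcaveOn ℝ (Set.Ici 0) σ) : 0 < phiSigma σ 1 := by
  have h2 := sigma_two hmono h31 hodd hconc
  have h0 := sigma_zero hodd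
  unfold phiSigma
  rw [show (1:ℝ) + 1 = 2 by norm_num, show (1:ℝ) - 1 = 0 by norm_num, h0]
  linarith

lemma phi_tail (hmono : Monotone σ) (htop : Filter.Tendsto σ Filter.atTop (nhds 1))
    (hodd : ∀ x : ℝ, σ (-x) - 1/2 = -(σ x - 1/2)) {ε : ℝ} (hε : 0 < ε) :
    ∃ R : ℝ, 1 ≤ R ∧ ∀ y : ℝ, R ≤ |y| → phiSigma σ y ≤ ε := by
  have hle1 : ∀ x, σ x ≤ 1 := fun x => hmono.ge_of_tendsto htop x
  have hev : ∀ᶠ t in Filter.atTop, 1 - 2*ε ≤ σ t :=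
    htop.eventually (eventually_ge_nhds (by linarith))
  obtain ⟨T, hT⟩ := Filter.eventually_atTop.1 hev
  refine ⟨max (T + 1) 1, le_max_right _ _, ?_⟩
  have key : ∀ y : ℝ, max (T + 1) 1 ≤ y → phiSigma σ y ≤ ε := by
    intro y hy
    have h1 : T ≤ y - 1 := by have := le_trans (le_max_left (T+1) 1) hy; linarith
    have := hT _ h1
    have := hle1 (y + 1)
    unfold phiSigma; linarith
  intro y hy
  rcases abs_cases y with ⟨h1, _⟩ | ⟨h1, _⟩
  · exact key y (h1 ▸ hy)
  · rw [← phi_even hodd]; exact key (-y) (h1 ▸ hy)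

lemma round_mono' : Monotone (round : ℝ → ℤ) := by
  intro x y h
  rw [round_eq, round_eq]
  exact Int.floor_mono (by linarith)

lemma round_nearest (x : ℝ) (m : ℤ) : |x - (round x : ℝ)| ≤ |x - (m : ℝ)| := by
  rcases le_or_gt (1/2 : ℝ) |x - (m:ℝ)| with h | h
  · exact (abs_sub_round x).trans h
  · have : round x = m := by
      rw [round_eq, Int.floor_eq_iff]
      rw [abs_lt] at h
      constructor <;> push_cast <;> linarith
    rw [this]

end Aux

theorem Dmm_pointwise_convergence (χ σ : ℝ → ℝ) (α : ℝ) (hα : 0 < α)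
    (hχ0 : ∀ t, 0 ≤ χ t) (hχbdd : ∃ M, ∀ t, χ t ≤ M) (hχint : Integrable χ)
    (hA : 0 < ∫ u in (0:ℝ)..1, χ u)
    (hM0 : ∃ M : ℝ, ∀ t : ℝ, ∀ s : Finset ℤ, ∑ k ∈ s, χ (t - (k : ℝ)) ≤ M)
    (hmono : Monotone σ)
    (hbot : Filter.Tendsto σ Filter.atBot (nhds 0))
    (htop : Filter.Tendsto σ Filter.atTop (nhds 1))
    (h31 : σ 1 < σ 3)
    (hodd : ∀ x : ℝ, σ (-x) - 1/2 = -(σ x - 1/2))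
    (hC2 : ContDiff ℝ 2 σ) (hconc : ConcaveOn ℝ (Set.Ici 0) σ)
    (hdecay : ∃ C B : ℝ, 0 < C ∧ 0 < B ∧ ∀ x : ℝ, x ≤ -B → σ x ≤ C * |x| ^ (-(1 + α)))
    (a b : ℤ) (hab : a < b)
    (f : ℝ → ℝ) (hf : Measurable f)
    (hf01 : ∀ t ∈ Set.Icc (a:ℝ) (b:ℝ), f t ∈ Set.Icc (0:ℝ) 1)
    (x₀ : ℝ) (hx₀ : x₀ ∈ Set.Icc (a:ℝ) (b:ℝ))
    (hcont : ContinuousWithinAt f (Set.Icc (a:ℝ) (b:ℝ)) x₀) :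
    Filter.Tendsto (fun n : ℕ => Dmm χ σ a b n f x₀) Filter.atTop (nhds (f x₀)) := by
  classical
  have hab' : (a:ℝ) ≤ (b:ℝ) := by exact_mod_cast hab.le
  have hfx₀ : f x₀ ∈ Set.Icc (0:ℝ) 1 := hf01 x₀ hx₀
  have c₁pos : 0 < phiSigma σ 1 := phi_one_pos hmono h31 hodd hconc
  rw [Metric.tendsto_atTop]
  intro ε hε
  obtain ⟨δ, hδpos, hδ⟩ := Metric.continuousWithinAt_iff.1 hcont (ε/3) (by linarith)
  obtain ⟨R, hR1, hRtail⟩ := phi_tail hmono htop hodd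
    (show 0 < ε/3 * phiSigma σ 1 by positivity)
  have hcT : Filter.Tendsto (fun n : ℕ => (n:ℝ) * (δ/2)) Filter.atTop Filter.atTop :=
    tendsto_natCast_atTop_atTop.atTop_mul_const (by positivity)
  have E2 := hcT.eventually_gt_atTop (max R 1)
  have E3 : ∀ᶠ n : ℕ in Filter.atTop,
      (∫ x, χ x) - (∫ x in (-((n:ℝ)*(δ/2)))..((n:ℝ)*(δ/2)), χ x)
        < ε/3 * ∫ u in (0:ℝ)..1, χ u := by
    have h1 : Filter.Tendsto (fun n : ℕ => ∫ x in (-((n:ℝ)*(δ/2)))..((n:ℝ)*(δ/2)), χ x)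
        Filter.atTop (nhds (∫ x, χ x)) :=
      intervalIntegral_tendsto_integral hχint (Filter.tendsto_neg_atTop_atBot.comp hcT) hcT
    have h2 := h1.const_sub (∫ x, χ x)
    rw [sub_self] at h2
    exact h2.eventually (eventually_lt_nhds (by positivity))
  have key : ∀ᶠ n : ℕ in Filter.atTop, |Dmm χ σ a b n f x₀ - f x₀| < ε := by
    filter_upwards [Filter.eventually_ge_atTop 1, E2, E3] with n hn1 hn2 hn3
    have hn0 : (0:ℝ) < (n:ℝ) := by exact_mod_cast Nat.lt_of_lt_of_le Nat.zero_lt_one hn1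
    have hnne : (n:ℝ) ≠ 0 := ne_of_gt hn0
    -- index set facts
    have hnab : (n:ℤ)*a ≤ (n:ℤ)*b - 1 := by
      have h0 : (0:ℤ) < (n:ℤ) := by exact_mod_cast hn1
      have : (n:ℤ)*a < (n:ℤ)*b := mul_lt_mul_of_pos_left hab h0
      omega
    -- the nearest in-range index
    set k₀ : ℤ := min ((n:ℤ)*b - 1) (round ((n:ℝ)*x₀)) with hk₀def
    have hround_ge : (n:ℤ)*a ≤ round ((n:ℝ)*x₀) := by
      have h1 : (((n:ℤ)*a : ℤ) : ℝ) ≤ (n:ℝ)*x₀ := by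
        push_cast
        exact mul_le_mul_of_nonneg_left hx₀.1 hn0.le
      have := round_mono' h1
      rwa [round_intCast] at this
    have hround_le : round ((n:ℝ)*x₀) ≤ (n:ℤ)*b := by
      have h1 : (n:ℝ)*x₀ ≤ (((n:ℤ)*b : ℤ) : ℝ) := by
        push_cast
        exact mul_le_mul_of_nonneg_left hx₀.2 hn0.le
      have := round_mono' h1
      rwa [round_intCast] at this
    have hk₀S : k₀ ∈ Set.Icc ((n:ℤ)*a) ((n:ℤ)*b - 1) :=
      ⟨le_min hnab hround_ge, min_le_left _ _⟩
    have hk₀near : |(n:ℝ)*x₀ - (k₀:ℝ)| ≤ 1 := by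
      rcases le_or_gt (round ((n:ℝ)*x₀)) ((n:ℤ)*b - 1) with hcase | hcase
      · rw [hk₀def, min_eq_right hcase]
        exact (abs_sub_round _).trans (by norm_num)
      · have hk : k₀ = (n:ℤ)*b - 1 := min_eq_left hcase.le
        have hrb : round ((n:ℝ)*x₀) = (n:ℤ)*b := le_antisymm hround_le (by omega)
        have h1 := abs_sub_round ((n:ℝ)*x₀)
        rw [hrb] at h1
        rw [abs_le] at h1
        have hxhigh : (n:ℝ)*x₀ ≤ (((n:ℤ)*b : ℤ) : ℝ) := by
          push_cast; exact mul_le_mul_of_nonneg_left hx₀.2 hn0.le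
        rw [hk, abs_le]
        push_cast at h1 hxhigh ⊢
        constructor <;> linarith
    have hk₀max : ∀ d ∈ Set.Icc ((n:ℤ)*a) ((n:ℤ)*b - 1),
        |(n:ℝ)*x₀ - (k₀:ℝ)| ≤ |(n:ℝ)*x₀ - (d:ℝ)| := by
      intro d hd
      rcases le_or_gt (round ((n:ℝ)*x₀)) ((n:ℤ)*b - 1) with hcase | hcase
      · rw [hk₀def, min_eq_right hcase]
        exact round_nearest _ d
      · have hk : k₀ = (n:ℤ)*b - 1 := min_eq_left hcase.le
        have hrb : round ((n:ℝ)*x₀) = (n:ℤ)*b := le_antisymm hround_le (by omega)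
        have h1 := abs_sub_round ((n:ℝ)*x₀)
        rw [hrb] at h1
        rw [abs_le] at h1
        have hdk : (d:ℝ) ≤ (k₀:ℝ) := by exact_mod_cast hk ▸ hd.2
        have h2 : 0 ≤ (n:ℝ)*x₀ - (k₀:ℝ) := by
          rw [hk]; push_cast at h1 ⊢; linarith
        rw [abs_of_nonneg h2, abs_of_nonneg (by linarith)]
        linarith
    -- phi side
    have hMg : IsGreatest
        ((fun d : ℤ => phiSigma σ ((n:ℝ)*x₀ - (d:ℝ))) '' Set.Icc ((n:ℤ)*a) ((n:ℤ)*b - 1))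
        (phiSigma σ ((n:ℝ)*x₀ - (k₀:ℝ))) := by
      constructor
      · exact ⟨k₀, hk₀S, rfl⟩
      · rintro y ⟨d, hd, rfl⟩
        exact phi_abs hconc hodd (hk₀max d hd)
    have hMeq : sSup ((fun d : ℤ => phiSigma σ ((n:ℝ)*x₀ - (d:ℝ))) ''
        Set.Icc ((n:ℤ)*a) ((n:ℤ)*b - 1)) = phiSigma σ ((n:ℝ)*x₀ - (k₀:ℝ)) :=
      hMg.csSup_eq
    have hφk₀ : phiSigma σ 1 ≤ phiSigma σ ((n:ℝ)*x₀ - (k₀:ℝ)) :=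
      phi_abs hconc hodd (by rw [abs_one]; exact hk₀near)
    have hMpos : 0 < sSup ((fun d : ℤ => phiSigma σ ((n:ℝ)*x₀ - (d:ℝ))) ''
        Set.Icc ((n:ℤ)*a) ((n:ℤ)*b - 1)) := by
      rw [hMeq]; exact lt_of_lt_of_le c₁pos hφk₀
    -- integral estimates for every index
    have hest : ∀ k : ℤ, k ∈ Set.Icc ((n:ℤ)*a) ((n:ℤ)*b - 1) →
        0 ≤ (∫ t in (a:ℝ)..(b:ℝ), χ ((n:ℝ) * t - (k:ℝ)) * f t) /
            (∫ t in (a:ℝ)..(b:ℝ), χ ((n:ℝ) * t - (k:ℝ))) ∧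
        (∫ t in (a:ℝ)..(b:ℝ), χ ((n:ℝ) * t - (k:ℝ)) * f t) /
            (∫ t in (a:ℝ)..(b:ℝ), χ ((n:ℝ) * t - (k:ℝ))) ≤ 1 ∧
        (|(n:ℝ)*x₀ - (k:ℝ)| < (n:ℝ)*(δ/2) →
          |(∫ t in (a:ℝ)..(b:ℝ), χ ((n:ℝ) * t - (k:ℝ)) * f t) /
            (∫ t in (a:ℝ)..(b:ℝ), χ ((n:ℝ) * t - (k:ℝ))) - f x₀| ≤ 2*ε/3) := by
      intro k hk
      have hk1 : (n:ℝ)*(a:ℝ) ≤ (k:ℝ) := by exact_mod_cast hk.1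
      have hk2 : (k:ℝ) + 1 ≤ (n:ℝ)*(b:ℝ) := by
        have h := hk.2
        have : k + 1 ≤ (n:ℤ)*b := by omega
        exact_mod_cast this
      have hIχ : Integrable (fun t : ℝ => χ ((n:ℝ)*t - (k:ℝ))) :=
        (hχint.comp_sub_right (k:ℝ)).comp_mul_left' hnne
      have hIχOn : IntegrableOn (fun t : ℝ => χ ((n:ℝ)*t - (k:ℝ))) (Set.Ioc (a:ℝ) b) :=
        hIχ.integrableOn
      have hfb : ∀ t ∈ Set.Ioc (a:ℝ) (b:ℝ), f t ∈ Set.Icc (0:ℝ) 1 :=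
        fun t ht => hf01 t ⟨ht.1.le, ht.2⟩
      have hIfg : IntegrableOn (fun t : ℝ => χ ((n:ℝ)*t - (k:ℝ)) * f t) (Set.Ioc (a:ℝ) b) := by
        apply Integrable.mono' hIχOn
        · exact (hIχ.1.restrict).mul (hf.aestronglyMeasurable.restrict)
        · refine (ae_restrict_iff' measurableSet_Ioc).2 (Filter.Eventually.of_forall fun t ht => ?_)
          have h1 := hfb t ht
          rw [Real.norm_eq_abs, abs_mul, abs_of_nonneg (hχ0 _)]
          calc χ ((n:ℝ)*t - (k:ℝ)) * |f t| ≤ χ ((n:ℝ)*t - (k:ℝ)) * 1 :=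
                mul_le_mul_of_nonneg_left (abs_le.2 ⟨by linarith [h1.1], h1.2⟩) (hχ0 _)
            _ = χ ((n:ℝ)*t - (k:ℝ)) := mul_one _
      have eNum : (∫ t in (a:ℝ)..(b:ℝ), χ ((n:ℝ)*t - (k:ℝ)) * f t)
          = ∫ t in Set.Ioc (a:ℝ) (b:ℝ), χ ((n:ℝ)*t - (k:ℝ)) * f t :=
        intervalIntegral.integral_of_le hab'
      have eDen : (∫ t in (a:ℝ)..(b:ℝ), χ ((n:ℝ)*t - (k:ℝ)))
          = ∫ t in Set.Ioc (a:ℝ) (b:ℝ), χ ((n:ℝ)*t - (k:ℝ)) :=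
        intervalIntegral.integral_of_le hab'
      -- denominator lower bound
      have hsub : Set.Ioc ((k:ℝ)/(n:ℝ)) (((k:ℝ)+1)/(n:ℝ)) ⊆ Set.Ioc (a:ℝ) (b:ℝ) := by
        apply Set.Ioc_subset_Ioc
        · rw [le_div_iff₀ hn0]; nlinarith
        · rw [div_le_iff₀ hn0]; nlinarith
      have hDen1 : (∫ t in Set.Ioc ((k:ℝ)/(n:ℝ)) (((k:ℝ)+1)/(n:ℝ)), χ ((n:ℝ)*t - (k:ℝ)))
          ≤ ∫ t in Set.Ioc (a:ℝ) (b:ℝ), χ ((n:ℝ)*t - (k:ℝ)) :=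
        setIntegral_mono_set hIχOn (Filter.Eventually.of_forall fun t => hχ0 _)
          (HasSubset.Subset.eventuallyLE hsub)
      have hDen2 : (∫ t in Set.Ioc ((k:ℝ)/(n:ℝ)) (((k:ℝ)+1)/(n:ℝ)), χ ((n:ℝ)*t - (k:ℝ)))
          = (∫ u in (0:ℝ)..1, χ u) / (n:ℝ) := by
        have hle : (k:ℝ)/(n:ℝ) ≤ ((k:ℝ)+1)/(n:ℝ) := by gcongr; linarith
        rw [← intervalIntegral.integral_of_le hle,
          intervalIntegral.integral_comp_mul_sub χ hnne (k:ℝ),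
          show (n:ℝ) * ((k:ℝ)/(n:ℝ)) - (k:ℝ) = 0 by field_simp; ring,
          show (n:ℝ) * (((k:ℝ)+1)/(n:ℝ)) - (k:ℝ) = 1 by field_simp; ring,
          smul_eq_mul, inv_mul_eq_div]
      have hDA : (∫ u in (0:ℝ)..1, χ u) / (n:ℝ)
          ≤ ∫ t in Set.Ioc (a:ℝ) (b:ℝ), χ ((n:ℝ)*t - (k:ℝ)) := hDen2 ▸ hDen1
      have hDenpos : 0 < ∫ t in Set.Ioc (a:ℝ) (b:ℝ), χ ((n:ℝ)*t - (k:ℝ)) :=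
        lt_of_lt_of_le (by positivity) hDA
      have hNum0 : 0 ≤ ∫ t in Set.Ioc (a:ℝ) (b:ℝ), χ ((n:ℝ)*t - (k:ℝ)) * f t :=
        setIntegral_nonneg measurableSet_Ioc fun t ht => mul_nonneg (hχ0 _) (hfb t ht).1
      have hNumle : (∫ t in Set.Ioc (a:ℝ) (b:ℝ), χ ((n:ℝ)*t - (k:ℝ)) * f t)
          ≤ ∫ t in Set.Ioc (a:ℝ) (b:ℝ), χ ((n:ℝ)*t - (k:ℝ)) :=
        setIntegral_mono_on hIfg hIχOn measurableSet_Ioc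
          (fun t ht => mul_le_of_le_one_right (hχ0 _) (hfb t ht).2)
      rw [eNum, eDen]
      refine ⟨div_nonneg hNum0 hDenpos.le, (div_le_one hDenpos).2 hNumle, ?_⟩
      intro hnear
      -- the tail indicator function
      set ψ : ℝ → ℝ := (Set.Ioc (-((n:ℝ)*(δ/2))) ((n:ℝ)*(δ/2)))ᶜ.indicator χ with hψdef
      have hψint : Integrable ψ := hχint.indicator measurableSet_Ioc.compl
      have hψ0 : ∀ u, 0 ≤ ψ u := fun u => Set.indicator_nonneg (fun v _ => hχ0 v) u
      have hIψ : Integrable (fun t : ℝ => ψ ((n:ℝ)*t - (k:ℝ))) :=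
        (hψint.comp_sub_right (k:ℝ)).comp_mul_left' hnne
      have hdiff : (∫ t in Set.Ioc (a:ℝ) (b:ℝ), χ ((n:ℝ)*t - (k:ℝ)) * f t)
          - f x₀ * (∫ t in Set.Ioc (a:ℝ) (b:ℝ), χ ((n:ℝ)*t - (k:ℝ)))
          = ∫ t in Set.Ioc (a:ℝ) (b:ℝ), χ ((n:ℝ)*t - (k:ℝ)) * (f t - f x₀) := by
        rw [← integral_const_mul, ← integral_sub hIfg (hIχOn.const_mul (f x₀))]
        congr 1
        ext t
        ring
      have hbound : |∫ t in Set.Ioc (a:ℝ) (b:ℝ), χ ((n:ℝ)*t - (k:ℝ)) * (f t - f x₀)|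
          ≤ ∫ t in Set.Ioc (a:ℝ) (b:ℝ),
              (ε/3 * χ ((n:ℝ)*t - (k:ℝ)) + ψ ((n:ℝ)*t - (k:ℝ))) := by
        rw [← Real.norm_eq_abs]
        have hgint : IntegrableOn
            (fun t : ℝ => ε/3 * χ ((n:ℝ)*t - (k:ℝ)) + ψ ((n:ℝ)*t - (k:ℝ)))
            (Set.Ioc (a:ℝ) (b:ℝ)) := (hIχOn.const_mul (ε/3)).add hIψ.integrableOn
        apply norm_integral_le_of_norm_le hgint
        refine (ae_restrict_iff' measurableSet_Ioc).2 (Filter.Eventually.of_forall fun t ht => ?_)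
        rcases lt_or_ge (dist t x₀) δ with hlt | hge
        · have h1 := hδ ⟨ht.1.le, ht.2⟩ hlt
          have h2 : |f t - f x₀| ≤ ε/3 := by rw [← Real.dist_eq]; exact h1.le
          rw [Real.norm_eq_abs, abs_mul, abs_of_nonneg (hχ0 _)]
          linarith [mul_le_mul_of_nonneg_left h2 (hχ0 ((n:ℝ)*t - (k:ℝ))),
            hψ0 ((n:ℝ)*t - (k:ℝ)), mul_comm (χ ((n:ℝ)*t - (k:ℝ))) (ε/3)]
        · have hta : δ ≤ |t - x₀| := by rwa [Real.dist_eq] at hge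
          have hout : ((n:ℝ)*t - (k:ℝ)) ∈ (Set.Ioc (-((n:ℝ)*(δ/2))) ((n:ℝ)*(δ/2)))ᶜ := by
            intro hmem
            have habs : |(n:ℝ)*t - (k:ℝ)| ≤ (n:ℝ)*(δ/2) := abs_le.2 ⟨le_of_lt hmem.1, hmem.2⟩
            have h1 : (n:ℝ)*|t - x₀| ≤ |(n:ℝ)*t - (k:ℝ)| + |(n:ℝ)*x₀ - (k:ℝ)| := by
              calc (n:ℝ)*|t - x₀| = |(n:ℝ)*(t - x₀)| := by rw [abs_mul, abs_of_pos hn0]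
                _ = |((n:ℝ)*t - (k:ℝ)) + (-((n:ℝ)*x₀ - (k:ℝ)))| := by ring_nf
                _ ≤ |(n:ℝ)*t - (k:ℝ)| + |(-((n:ℝ)*x₀ - (k:ℝ)))| := abs_add_le _ _
                _ = |(n:ℝ)*t - (k:ℝ)| + |(n:ℝ)*x₀ - (k:ℝ)| := by rw [abs_neg]
            have h2 : (n:ℝ)*δ ≤ (n:ℝ)*|t - x₀| := mul_le_mul_of_nonneg_left hta hn0.le
            have e2 : (n:ℝ)*δ = 2*((n:ℝ)*(δ/2)) := by ring
            linarith
          have hψeq : ψ ((n:ℝ)*t - (k:ℝ)) = χ ((n:ℝ)*t - (k:ℝ)) :=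
            Set.indicator_of_mem hout χ
          have h1 := hfb t ht
          have h2 : |f t - f x₀| ≤ 1 :=
            abs_le.2 ⟨by linarith [h1.1, hfx₀.2], by linarith [h1.2, hfx₀.1]⟩
          rw [Real.norm_eq_abs, abs_mul, abs_of_nonneg (hχ0 _), hψeq]
          linarith [mul_le_mul_of_nonneg_left h2 (hχ0 ((n:ℝ)*t - (k:ℝ))),
            mul_one (χ ((n:ℝ)*t - (k:ℝ))),
            mul_nonneg (show (0:ℝ) ≤ ε/3 by linarith) (hχ0 ((n:ℝ)*t - (k:ℝ)))]
      have hsplit : (∫ t in Set.Ioc (a:ℝ) (b:ℝ),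
            (ε/3 * χ ((n:ℝ)*t - (k:ℝ)) + ψ ((n:ℝ)*t - (k:ℝ))))
          = ε/3 * (∫ t in Set.Ioc (a:ℝ) (b:ℝ), χ ((n:ℝ)*t - (k:ℝ)))
            + ∫ t in Set.Ioc (a:ℝ) (b:ℝ), ψ ((n:ℝ)*t - (k:ℝ)) := by
        rw [integral_add (hIχOn.const_mul _) hIψ.integrableOn, integral_const_mul]
      have hψ1 : (∫ t in Set.Ioc (a:ℝ) (b:ℝ), ψ ((n:ℝ)*t - (k:ℝ)))
          ≤ ∫ t : ℝ, ψ ((n:ℝ)*t - (k:ℝ)) :=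
        setIntegral_le_integral hIψ (Filter.Eventually.of_forall fun t => hψ0 _)
      have hψ2 : (∫ t : ℝ, ψ ((n:ℝ)*t - (k:ℝ))) = ((n:ℝ))⁻¹ * ∫ u, ψ u := by
        have h := MeasureTheory.Measure.integral_comp_mul_left
          (fun u => ψ (u - (k:ℝ))) (n:ℝ)
        calc (∫ t : ℝ, ψ ((n:ℝ)*t - (k:ℝ))) = ∫ t : ℝ, (fun u => ψ (u - (k:ℝ))) ((n:ℝ)*t) := rfl
          _ = |((n:ℝ))⁻¹| • ∫ u : ℝ, ψ (u - (k:ℝ)) := h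
          _ = ((n:ℝ))⁻¹ * ∫ u : ℝ, ψ u := by
              rw [integral_sub_right_eq_self ψ (k:ℝ), smul_eq_mul,
                abs_of_pos (inv_pos.2 hn0)]
      have hψ3 : (∫ u, ψ u) = (∫ x, χ x)
          - ∫ x in (-((n:ℝ)*(δ/2)))..((n:ℝ)*(δ/2)), χ x := by
        have hc0 : (0:ℝ) < (n:ℝ)*(δ/2) := by positivity
        rw [hψdef, MeasureTheory.integral_indicator measurableSet_Ioc.compl,
          intervalIntegral.integral_of_le (by linarith : -((n:ℝ)*(δ/2)) ≤ (n:ℝ)*(δ/2))]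
        have h := MeasureTheory.integral_add_compl
          (measurableSet_Ioc : MeasurableSet (Set.Ioc (-((n:ℝ)*(δ/2))) ((n:ℝ)*(δ/2)))) hχint
        linarith
      -- combine
      have htail : ((n:ℝ))⁻¹ * (∫ u, ψ u) ≤ ε/3 * ((∫ u in (0:ℝ)..1, χ u) / (n:ℝ)) := by
        rw [hψ3]
        rw [show ε/3 * ((∫ u in (0:ℝ)..1, χ u) / (n:ℝ))
          = ((n:ℝ))⁻¹ * (ε/3 * ∫ u in (0:ℝ)..1, χ u) by ring]
        exact mul_le_mul_of_nonneg_left hn3.le (inv_pos.2 hn0).le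
      have hfinal : |(∫ t in Set.Ioc (a:ℝ) (b:ℝ), χ ((n:ℝ)*t - (k:ℝ)) * f t)
          - f x₀ * (∫ t in Set.Ioc (a:ℝ) (b:ℝ), χ ((n:ℝ)*t - (k:ℝ)))|
          ≤ 2*ε/3 * (∫ t in Set.Ioc (a:ℝ) (b:ℝ), χ ((n:ℝ)*t - (k:ℝ))) := by
        rw [hdiff]
        refine hbound.trans ?_
        rw [hsplit]
        have h1 : (∫ t in Set.Ioc (a:ℝ) (b:ℝ), ψ ((n:ℝ)*t - (k:ℝ)))
            ≤ ε/3 * (∫ t in Set.Ioc (a:ℝ) (b:ℝ), χ ((n:ℝ)*t - (k:ℝ))) := by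
          refine (hψ1.trans (le_of_eq hψ2)).trans (htail.trans ?_)
          exact mul_le_mul_of_nonneg_left hDA (by linarith)
        linarith
      have eq1 : ((∫ t in Set.Ioc (a:ℝ) (b:ℝ), χ ((n:ℝ)*t - (k:ℝ)) * f t)
            - f x₀ * (∫ t in Set.Ioc (a:ℝ) (b:ℝ), χ ((n:ℝ)*t - (k:ℝ))))
            / (∫ t in Set.Ioc (a:ℝ) (b:ℝ), χ ((n:ℝ)*t - (k:ℝ)))
          = (∫ t in Set.Ioc (a:ℝ) (b:ℝ), χ ((n:ℝ)*t - (k:ℝ)) * f t)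
            / (∫ t in Set.Ioc (a:ℝ) (b:ℝ), χ ((n:ℝ)*t - (k:ℝ))) - f x₀ := by
        rw [sub_div, mul_div_assoc, div_self (ne_of_gt hDenpos), mul_one]
      rw [← eq1, abs_div, abs_of_pos hDenpos, div_le_iff₀ hDenpos]
      exact hfinal
    -- assemble
    have hSne : (Set.Icc ((n:ℤ)*a) ((n:ℤ)*b - 1)).Nonempty := ⟨k₀, hk₀S⟩
    have hub : Dmm χ σ a b n f x₀ ≤ f x₀ + 2*ε/3 := by
      unfold Dmm
      apply csSup_le (hSne.image _)
      rintro y ⟨k, hkS, rfl⟩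
      dsimp only
      rcases lt_or_ge |(n:ℝ)*x₀ - (k:ℝ)| ((n:ℝ)*(δ/2)) with hnear | hfar
      · have h := (hest k hkS).2.2 hnear
        exact (min_le_left _ _).trans (by linarith [(abs_le.1 h).2])
      · refine (min_le_right _ _).trans ?_
        have hRle : R ≤ |(n:ℝ)*x₀ - (k:ℝ)| :=
          le_trans (le_trans (le_max_left R 1) hn2.le) hfar
        have hφk : phiSigma σ ((n:ℝ)*x₀ - (k:ℝ)) ≤ ε/3 * phiSigma σ 1 := hRtail _ hRle
        have hW : phiSigma σ ((n:ℝ)*x₀ - (k:ℝ)) / sSup ((fun d : ℤ =>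
            phiSigma σ ((n:ℝ)*x₀ - (d:ℝ))) '' Set.Icc ((n:ℤ)*a) ((n:ℤ)*b - 1)) ≤ ε/3 := by
          rw [div_le_iff₀ hMpos]
          calc phiSigma σ ((n:ℝ)*x₀ - (k:ℝ)) ≤ ε/3 * phiSigma σ 1 := hφk
            _ ≤ ε/3 * sSup ((fun d : ℤ => phiSigma σ ((n:ℝ)*x₀ - (d:ℝ))) ''
                Set.Icc ((n:ℤ)*a) ((n:ℤ)*b - 1)) := by
                refine mul_le_mul_of_nonneg_left ?_ (by linarith)
                rw [hMeq]; exact hφk₀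
        linarith [hfx₀.1]
    have hlb : f x₀ - 2*ε/3 ≤ Dmm χ σ a b n f x₀ := by
      unfold Dmm
      have hmem : (fun k : ℤ =>
          min ((∫ t in (a:ℝ)..(b:ℝ), χ ((n:ℝ) * t - (k:ℝ)) * f t) /
                (∫ t in (a:ℝ)..(b:ℝ), χ ((n:ℝ) * t - (k:ℝ))))
            (phiSigma σ ((n:ℝ) * x₀ - (k:ℝ)) /
              sSup ((fun d : ℤ => phiSigma σ ((n:ℝ) * x₀ - (d:ℝ))) ''
                Set.Icc ((n:ℤ) * a) ((n:ℤ) * b - 1)))) k₀ ∈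
          ((fun k : ℤ =>
          min ((∫ t in (a:ℝ)..(b:ℝ), χ ((n:ℝ) * t - (k:ℝ)) * f t) /
                (∫ t in (a:ℝ)..(b:ℝ), χ ((n:ℝ) * t - (k:ℝ))))
            (phiSigma σ ((n:ℝ) * x₀ - (k:ℝ)) /
              sSup ((fun d : ℤ => phiSigma σ ((n:ℝ) * x₀ - (d:ℝ))) ''
                Set.Icc ((n:ℤ) * a) ((n:ℤ) * b - 1)))) ''
            Set.Icc ((n:ℤ) * a) ((n:ℤ) * b - 1)) := ⟨k₀, hk₀S, rfl⟩
      refine le_trans ?_ (le_csSup (((Set.finite_Icc _ _).image _).bddAbove) hmem)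
      dsimp only
      have hW : phiSigma σ ((n:ℝ)*x₀ - (k₀:ℝ)) / sSup ((fun d : ℤ =>
          phiSigma σ ((n:ℝ)*x₀ - (d:ℝ))) '' Set.Icc ((n:ℤ)*a) ((n:ℤ)*b - 1)) = 1 := by
        rw [hMeq]
        exact div_self (ne_of_gt (lt_of_lt_of_le c₁pos hφk₀))
      rw [hW]
      have h1 := hest k₀ hk₀S
      have hnear' : |(n:ℝ)*x₀ - (k₀:ℝ)| < (n:ℝ)*(δ/2) :=
        lt_of_le_of_lt hk₀near (lt_of_le_of_lt (le_max_right R 1) hn2)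
      have h2 := h1.2.2 hnear'
      rw [min_eq_left h1.2.1]
      linarith [(abs_le.1 h2).1]
    rw [abs_lt]
    constructor <;> linarith
  obtain ⟨N, hN⟩ := Filter.eventually_atTop.1 key
  exact ⟨N, fun n hn => by rw [Real.dist_eq]; exact hN n hn⟩
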